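/- Let λ, μ > 0 and σ(α) = (λ/(α+λ))·(√(α²+μ²)/μ) for α > 0. The unique minimizer of σ over (0, ∞) is α* = μ²/λ, and σ(α*) = λ/√(λ² + μ²) < 1. -/

import Mathlib

theorem stmt_3 (lam mu : ℝ) (hlam : 0 < lam) (hmu : 0 < mu) :
    (∀ α : ℝ, 0 < α →
        (lam / (mu ^ 2 / lam + lam)) * (Real.sqrt ((mu ^ 2 / lam) ^ 2 + mu ^ 2) / mu) ≤
          (lam / (α + lam)) * (Real.sqrt (α ^ 2 + mu ^ 2) / mu)) ∧
    (∀ α : ℝ, 0 < α →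
        (lam / (α + lam)) * (Real.sqrt (α ^ 2 + mu ^ 2) / mu) =
          (lam / (mu ^ 2 / lam + lam)) * (Real.sqrt ((mu ^ 2 / lam) ^ 2 + mu ^ 2) / mu) →
        α = mu ^ 2 / lam) ∧
    (lam / (mu ^ 2 / lam + lam)) * (Real.sqrt ((mu ^ 2 / lam) ^ 2 + mu ^ 2) / mu) =
      lam / Real.sqrt (lam ^ 2 + mu ^ 2) ∧
    lam / Real.sqrt (lam ^ 2 + mu ^ 2) < 1 := by
  set t := Real.sqrt (lam ^ 2 + mu ^ 2) with ht
  have ht2 : t ^ 2 = lam ^ 2 + mu ^ 2 := Real.sq_sqrt (by positivity)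
  have htpos : 0 < t := Real.sqrt_pos.mpr (by positivity)
  have hval : (lam / (mu ^ 2 / lam + lam)) * (Real.sqrt ((mu ^ 2 / lam) ^ 2 + mu ^ 2) / mu) =
      lam / t := by
    have h1 : (mu ^ 2 / lam) ^ 2 + mu ^ 2 = (mu * t / lam) ^ 2 := by
      field_simp
      nlinarith [ht2]
    rw [h1, Real.sqrt_sq (by positivity)]
    field_simp
    linear_combination ht2
  have key : ∀ α : ℝ, 0 < α →
      (α + lam) * mu ≤ Real.sqrt (α ^ 2 + mu ^ 2) * t := by
    intro α hα
    have hs2 : (Real.sqrt (α ^ 2 + mu ^ 2)) ^ 2 = α ^ 2 + mu ^ 2 :=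
      Real.sq_sqrt (by positivity)
    have hspos : 0 < Real.sqrt (α ^ 2 + mu ^ 2) := Real.sqrt_pos.mpr (by positivity)
    have hsq : ((α + lam) * mu) ^ 2 ≤ (Real.sqrt (α ^ 2 + mu ^ 2) * t) ^ 2 := by
      have : (Real.sqrt (α ^ 2 + mu ^ 2) * t) ^ 2 = (α ^ 2 + mu ^ 2) * (lam ^ 2 + mu ^ 2) := by
        rw [mul_pow, hs2, ht2]
      rw [this]
      nlinarith [sq_nonneg (lam * α - mu ^ 2)]
    exact (pow_le_pow_iff_left₀ (by positivity) (by positivity) (by norm_num)).mp hsq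
  refine ⟨?_, ?_, hval, ?_⟩
  · intro α hα
    rw [hval]
    rw [div_mul_div_comm, div_le_div_iff₀ htpos (by positivity)]
    nlinarith [key α hα, Real.sqrt_nonneg (α ^ 2 + mu ^ 2)]
  · intro α hα heq
    rw [hval] at heq
    have hs2 : (Real.sqrt (α ^ 2 + mu ^ 2)) ^ 2 = α ^ 2 + mu ^ 2 :=
      Real.sq_sqrt (by positivity)
    have heq2 : lam * (Real.sqrt (α ^ 2 + mu ^ 2) * t) = lam * ((α + lam) * mu) := by
      field_simp at heq
      nlinarith [heq]
    have heq3 : Real.sqrt (α ^ 2 + mu ^ 2) * t = (α + lam) * mu :=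
      mul_left_cancel₀ (ne_of_gt hlam) heq2
    have heq4 : (α ^ 2 + mu ^ 2) * (lam ^ 2 + mu ^ 2) = ((α + lam) * mu) ^ 2 := by
      have := congrArg (· ^ 2) heq3
      simpa [mul_pow, hs2, ht2] using this
    have h0 : (lam * α - mu ^ 2) ^ 2 = 0 := by nlinarith
    have : lam * α = mu ^ 2 := by nlinarith [sq_nonneg (lam * α - mu ^ 2), h0]
    field_simp
    linarith [this]
  · rw [div_lt_one htpos]
    nlinarith [ht2]
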